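/- For every k ≥ n the operators E_k^* = Σ_{i=1}^n x_i (∂/∂y_i)^k and F_k^* = Σ_{i=1}^n y_i (∂/∂x_i)^k vanish identically on the space of diagonal harmonics: E_k^*(f) = 0 and F_k^*(f) = 0 for every f ∈ DH_n. -/

import Mathlib

open MvPolynomial

/-- The polynomial ring `R = ℂ[x_1,…,x_n,y_1,…,y_n]`: the variable `x_i` is
`X (Sum.inl i)` and `y_i` is `X (Sum.inr i)`. -/
abbrev Rn (n : ℕ) : Type := MvPolynomial (Fin n ⊕ Fin n) ℂ

/-- The diagonal action of a permutation `σ ∈ S_n` on `R`, permuting the `x_i` and the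
`y_i` simultaneously. -/
noncomputable def permR (n : ℕ) (σ : Equiv.Perm (Fin n)) : Rn n →ₐ[ℂ] Rn n :=
  MvPolynomial.rename (Sum.map σ σ)

/-- A polynomial is symmetric if it is fixed by the diagonal `S_n`-action. -/
def IsSymP {n : ℕ} (f : Rn n) : Prop := ∀ σ : Equiv.Perm (Fin n), permR n σ f = f

/-- A polynomial is antisymmetric if every permutation acts on it by its sign. -/
def IsAntiSymP {n : ℕ} (f : Rn n) : Prop :=
  ∀ σ : Equiv.Perm (Fin n), permR n σ f = (Equiv.Perm.sign σ : ℤ) • f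

/-- The ideal `I_+` generated by all symmetric polynomials with zero constant term. -/
noncomputable def Iplus (n : ℕ) : Ideal (Rn n) :=
  Ideal.span {f | IsSymP f ∧ constantCoeff f = 0}

/-- The ideal `J` generated by all antisymmetric polynomials. -/
noncomputable def Jid (n : ℕ) : Ideal (Rn n) :=
  Ideal.span {f | IsAntiSymP f}

/-- The maximal homogeneous ideal `m = (x_1,…,x_n,y_1,…,y_n)`. -/
noncomputable def mId (n : ℕ) : Ideal (Rn n) :=
  Ideal.span (Set.range X)

/-- The operator `E_k = Σ_i y_i^k ∂/∂x_i`. -/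
noncomputable def Eop (n k : ℕ) : Rn n →ₗ[ℂ] Rn n :=
  ∑ i : Fin n,
    (LinearMap.mulLeft ℂ ((X (Sum.inr i) : Rn n) ^ k)) ∘ₗ (pderiv (Sum.inl i)).toLinearMap

/-- The operator `F_k = Σ_i x_i^k ∂/∂y_i`. -/
noncomputable def Fop (n k : ℕ) : Rn n →ₗ[ℂ] Rn n :=
  ∑ i : Fin n,
    (LinearMap.mulLeft ℂ ((X (Sum.inl i) : Rn n) ^ k)) ∘ₗ (pderiv (Sum.inr i)).toLinearMap

/-- The operator `E_k^* = Σ_i x_i (∂/∂y_i)^k`. -/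
noncomputable def Estar (n k : ℕ) : Rn n →ₗ[ℂ] Rn n :=
  ∑ i : Fin n,
    (LinearMap.mulLeft ℂ ((X (Sum.inl i) : Rn n))) ∘ₗ ((pderiv (Sum.inr i)).toLinearMap ^ k)

/-- The operator `F_k^* = Σ_i y_i (∂/∂x_i)^k`. -/
noncomputable def Fstar (n k : ℕ) : Rn n →ₗ[ℂ] Rn n :=
  ∑ i : Fin n,
    (LinearMap.mulLeft ℂ ((X (Sum.inr i) : Rn n))) ∘ₗ ((pderiv (Sum.inl i)).toLinearMap ^ k)

/-- The constant-coefficient differential operator `g(∂/∂x_1,…,∂/∂x_n,∂/∂y_1,…,∂/∂y_n)`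
obtained by substituting partial derivatives for the variables of `g`. -/
noncomputable def applyDeriv (n : ℕ) (g : Rn n) : Module.End ℂ (Rn n) :=
  ∑ s ∈ g.support, (MvPolynomial.coeff s g) •
    (((Finset.univ : Finset (Fin n ⊕ Fin n)).toList).map
      (fun j => ((pderiv j).toLinearMap : Module.End ℂ (Rn n)) ^ (s j))).prod

/-- The space of diagonal harmonics `DH_n`. -/
def DH (n : ℕ) : Set (Rn n) :=
  {f | ∀ g : Rn n, IsSymP g → constantCoeff g = 0 → applyDeriv n g f = 0}

/-- The Vandermonde determinant `Δ(x) = ∏_{i<j}(x_i − x_j)`. -/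
noncomputable def Dx (n : ℕ) : Rn n :=
  ∏ p ∈ Finset.univ.filter (fun p : Fin n × Fin n => p.1 < p.2),
    (X (Sum.inl p.1) - X (Sum.inl p.2))

/-- The Vandermonde determinant `Δ(y) = ∏_{i<j}(y_i − y_j)`. -/
noncomputable def Dy (n : ℕ) : Rn n :=
  ∏ p ∈ Finset.univ.filter (fun p : Fin n × Fin n => p.1 < p.2),
    (X (Sum.inr p.1) - X (Sum.inr p.2))

/-- Evaluation of a polynomial `φ` in `m` commuting variables on a family of `m`
pairwise commuting endomorphisms. -/
noncomputable def evalEndo {V : Type*} [AddCommMonoid V] [Module ℂ V] {m : ℕ}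
    (T : Fin m → Module.End ℂ V) (φ : MvPolynomial (Fin m) ℂ) : Module.End ℂ V :=
  ∑ s ∈ φ.support, (MvPolynomial.coeff s φ) •
    (((List.finRange m).map (fun j => (T j) ^ (s j))).prod)

/-- Weights recording the bigrading of `R`: an `x`-variable has bidegree `(1,0)` and a
`y`-variable has bidegree `(0,1)`. -/
def wtB (n : ℕ) : Fin n ⊕ Fin n → ℕ × ℕ :=
  Sum.elim (fun _ => ((1 : ℕ), (0 : ℕ))) (fun _ => ((0 : ℕ), (1 : ℕ)))

/-- Bihomogeneity of bidegree `d = (d_x, d_y)` with respect to the bigrading of `R`. -/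
def BiHom (n : ℕ) (f : Rn n) (d : ℕ × ℕ) : Prop :=
  MvPolynomial.IsWeightedHomogeneous (wtB n) f d


-- ===== auxiliary development =====

section comm
variable {σ R : Type*} [CommSemiring R]

lemma my_pderiv_comm (i j : σ) (p : MvPolynomial σ R) :
    pderiv i (pderiv j p) = pderiv j (pderiv i p) := by
  by_cases h : i = j
  · subst h; rfl
  induction p using MvPolynomial.induction_on' with
  | monomial s a =>
      simp only [pderiv_monomial]
      rw [Finsupp.tsub_apply, Finsupp.tsub_apply,
        Finsupp.single_eq_of_ne' h, Finsupp.single_eq_of_ne' (Ne.symm h),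
        tsub_right_comm]
      simp only [Nat.sub_zero]
      congr 1
      ring
  | add p q hp hq => simp [hp, hq]
end comm

lemma list_prod_map_mul {M α : Type*} [Monoid M] (a b : α → M)
    (h : ∀ i j, Commute (a i) (b j)) :
    ∀ l : List α, (l.map (fun j => a j * b j)).prod = (l.map a).prod * (l.map b).prod
  | [] => by simp
  | x :: l => by
    simp only [List.map_cons, List.prod_cons, list_prod_map_mul a b h l]
    have hc : Commute (b x) ((l.map a).prod) :=
      Commute.list_prod_right _ _ (by
        intro y hy
        obtain ⟨i, _, rfl⟩ := List.mem_map.mp hy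
        exact (h i x).symm)
    rw [mul_assoc, ← mul_assoc (b x), hc.eq, mul_assoc, mul_assoc]

lemma list_prod_map_eq_single {M α : Type*} [Monoid M] (f : α → M) (r : α)
    (hf : ∀ j, j ≠ r → f j = 1) :
    ∀ l : List α, l.Nodup → r ∈ l → (l.map f).prod = f r
  | x :: l, hn, hm => by
    rcases eq_or_ne x r with rfl | hx
    · simp only [List.map_cons, List.prod_cons]
      have h1 : (l.map f).prod = 1 := List.prod_eq_one (fun y hy => by
        obtain ⟨j, hj, rfl⟩ := List.mem_map.mp hy
        exact hf j (fun h => (List.nodup_cons.mp hn).1 (h ▸ hj)))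
      rw [h1, mul_one]
    · have hm' : r ∈ l := by
        rcases List.mem_cons.mp hm with h | h
        · exact absurd h.symm hx
        · exact h
      simp only [List.map_cons, List.prod_cons, hf x hx, one_mul]
      exact list_prod_map_eq_single f r hf l (List.nodup_cons.mp hn).2 hm'


namespace Stmt10Aux

variable {n : ℕ}

noncomputable def Dop (n : ℕ) (j : Fin n ⊕ Fin n) : Module.End ℂ (Rn n) :=
  (pderiv j).toLinearMap

lemma Dop_commute (i j : Fin n ⊕ Fin n) : Commute (Dop n i) (Dop n j) :=
  LinearMap.ext fun f => my_pderiv_comm i j f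

noncomputable def Pd (n : ℕ) (s : (Fin n ⊕ Fin n) →₀ ℕ) : Module.End ℂ (Rn n) :=
  (((Finset.univ : Finset (Fin n ⊕ Fin n)).toList).map (fun j => Dop n j ^ s j)).prod

lemma applyDeriv_eq (g : Rn n) :
    applyDeriv n g = (AddMonoidAlgebra.coeff g).sum (fun s c => c • Pd n s) := rfl

lemma Pd_add (s t : (Fin n ⊕ Fin n) →₀ ℕ) : Pd n (s + t) = Pd n s * Pd n t := by
  unfold Pd
  rw [← list_prod_map_mul (fun j => Dop n j ^ s j) (fun j => Dop n j ^ t j)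
    (fun i j => (Dop_commute i j).pow_pow _ _)]
  congr 1
  apply List.map_congr_left
  intro j _
  rw [Finsupp.add_apply, pow_add]

lemma applyDeriv_monomial (s : (Fin n ⊕ Fin n) →₀ ℕ) (c : ℂ) :
    applyDeriv n (monomial s c) = c • Pd n s := by
  rw [applyDeriv_eq]
  exact sum_monomial_eq (by rw [zero_smul])

lemma applyDeriv_add (g h : Rn n) :
    applyDeriv n (g + h) = applyDeriv n g + applyDeriv n h := by
  simp only [applyDeriv_eq]
  rw [AddMonoidAlgebra.coeff_add]
  exact Finsupp.sum_add_index' (fun s => zero_smul ℂ _) (fun s c d => add_smul c d _)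

noncomputable def applyDerivH (n : ℕ) : Rn n →+ Module.End ℂ (Rn n) where
  toFun := applyDeriv n
  map_zero' := by rw [applyDeriv_eq, AddMonoidAlgebra.coeff_zero]; exact Finsupp.sum_zero_index
  map_add' := applyDeriv_add

lemma applyDeriv_mul (g h : Rn n) :
    applyDeriv n (g * h) = applyDeriv n g * applyDeriv n h := by
  induction g using MvPolynomial.induction_on' with
  | add p q hp hq =>
      rw [add_mul, applyDeriv_add, applyDeriv_add, hp, hq, add_mul]
  | monomial s c =>
      induction h using MvPolynomial.induction_on' with
      | add p q hp hq =>
          rw [mul_add, applyDeriv_add, applyDeriv_add, hp, hq, mul_add]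
      | monomial t d =>
          rw [monomial_mul, applyDeriv_monomial, applyDeriv_monomial,
            applyDeriv_monomial, Pd_add, smul_mul_smul_comm]

lemma Pd_single (r : Fin n ⊕ Fin n) (m : ℕ) :
    Pd n (Finsupp.single r m) = Dop n r ^ m := by
  unfold Pd
  have h := list_prod_map_eq_single (fun j => Dop n j ^ (Finsupp.single r m) j) r
    (fun j hj => by simp only [Finsupp.single_eq_of_ne' (Ne.symm hj), pow_zero])
    (Finset.univ : Finset (Fin n ⊕ Fin n)).toList (Finset.nodup_toList _)
    (Finset.mem_toList.mpr (Finset.mem_univ r))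
  refine h.trans ?_
  simp only [Finsupp.single_eq_same]

lemma applyDeriv_X_pow (r : Fin n ⊕ Fin n) (m : ℕ) :
    applyDeriv n ((X r : Rn n) ^ m) = Dop n r ^ m := by
  rw [X_pow_eq_monomial, applyDeriv_monomial, one_smul, Pd_single]

lemma harmonic_pderiv_pow (n : ℕ) (f : Rn n) (hf : f ∈ DH n)
    (ι : Fin n → Fin n ⊕ Fin n)
    (hι : ∀ (σ : Equiv.Perm (Fin n)) (i : Fin n), Sum.map (⇑σ) (⇑σ) (ι i) = ι (σ i))
    (r : Fin n) : ((Dop n (ι r)) ^ n) f = 0 := by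
  classical
  set Pp : Polynomial (Rn n) :=
    ∏ i : Fin n, (Polynomial.X - Polynomial.C (X (ι i))) with hPp
  have hmon : ∀ i ∈ (Finset.univ : Finset (Fin n)),
      (Polynomial.X - Polynomial.C (X (ι i) : Rn n)).Monic :=
    fun i _ => Polynomial.monic_X_sub_C _
  have hmonic : Pp.Monic := Polynomial.monic_prod_of_monic _ _ hmon
  have hdeg : Pp.natDegree = n := by
    rw [hPp, Polynomial.natDegree_prod_of_monic _ _ hmon]
    simp [Polynomial.natDegree_X_sub_C]
  have heval : Pp.eval (X (ι r)) = 0 := by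
    rw [hPp, Polynomial.eval_prod]
    exact Finset.prod_eq_zero (Finset.mem_univ r) (by simp)
  have h0 : (∑ j ∈ Finset.range n, Pp.coeff j * (X (ι r) : Rn n) ^ j)
      + (X (ι r) : Rn n) ^ n = 0 := by
    have h1 := Polynomial.eval_eq_sum_range (x := (X (ι r) : Rn n)) (p := Pp)
    have hc : Pp.coeff n = 1 := by
      have h2 := hmonic.coeff_natDegree
      rw [hdeg] at h2
      exact h2
    rw [hdeg, Finset.sum_range_succ, hc, one_mul] at h1
    rw [← h1, heval]
  have hexp : (X (ι r) : Rn n) ^ n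
      = ∑ j ∈ Finset.range n, (-(Pp.coeff j)) * (X (ι r) : Rn n) ^ j := by
    have := eq_neg_of_add_eq_zero_right h0
    rw [this, ← Finset.sum_neg_distrib]
    exact Finset.sum_congr rfl (fun j _ => (neg_mul _ _).symm)
  have hcoef : ∀ j, j < n → applyDeriv n (-(Pp.coeff j)) f = 0 := by
    intro j hj
    apply hf
    · intro σ
      have hXmap : ∀ i, (permR n σ) ((X (ι i) : Rn n)) = X (ι (σ i)) := fun i => by
        rw [permR, rename_X, hι σ i]
      have hmap : Pp.map ((permR n σ) : Rn n →+* Rn n) = Pp := by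
        rw [hPp, Polynomial.map_prod]
        simp only [Polynomial.map_sub, Polynomial.map_X, Polynomial.map_C]
        simp only [RingHom.coe_coe, hXmap]
        exact Equiv.prod_comp σ (fun i => Polynomial.X - Polynomial.C (X (ι i) : Rn n))
      have : (permR n σ) (Pp.coeff j) = Pp.coeff j := by
        conv_rhs => rw [← hmap]
        rw [Polynomial.coeff_map]
        rfl
      rw [map_neg, this]
    · have hmap : Pp.map (constantCoeff : Rn n →+* ℂ) = Polynomial.X ^ n := by
        rw [hPp, Polynomial.map_prod]
        simp only [Polynomial.map_sub, Polynomial.map_X, Polynomial.map_C,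
          constantCoeff_X, map_zero, sub_zero]
        rw [Finset.prod_const, Finset.card_univ, Fintype.card_fin]
      have : constantCoeff (Pp.coeff j) = 0 := by
        have h2 : (Pp.map (constantCoeff : Rn n →+* ℂ)).coeff j
            = constantCoeff (Pp.coeff j) := Polynomial.coeff_map _ _
        rw [hmap, Polynomial.coeff_X_pow] at h2
        rw [← h2, if_neg (by omega)]
      rw [map_neg, this, neg_zero]
  have hDn : ((Dop n (ι r)) ^ n) f = applyDeriv n ((X (ι r) : Rn n) ^ n) f := by
    rw [applyDeriv_X_pow]
  rw [hDn, hexp]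
  show ((applyDerivH n) (∑ j ∈ Finset.range n, -Pp.coeff j * (X (ι r) : Rn n) ^ j)) f = 0
  rw [map_sum (applyDerivH n) _ (Finset.range n)]
  show ((∑ j ∈ Finset.range n, applyDeriv n (-Pp.coeff j * (X (ι r) : Rn n) ^ j)) : Module.End ℂ (Rn n)) f = 0
  rw [LinearMap.sum_apply]
  apply Finset.sum_eq_zero
  intro j hj
  show applyDeriv n ((-(Pp.coeff j)) * (X (ι r) : Rn n) ^ j) f = 0
  rw [mul_comm, applyDeriv_mul, Module.End.mul_apply,
    hcoef j (Finset.mem_range.mp hj), map_zero]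

lemma harmonic_pderiv_pow_k (n k : ℕ) (hk : n ≤ k) (f : Rn n) (hf : f ∈ DH n)
    (ι : Fin n → Fin n ⊕ Fin n)
    (hι : ∀ (σ : Equiv.Perm (Fin n)) (i : Fin n), Sum.map (⇑σ) (⇑σ) (ι i) = ι (σ i))
    (r : Fin n) : (((pderiv (ι r)).toLinearMap : Module.End ℂ (Rn n)) ^ k) f = 0 := by
  have h0 : ((Dop n (ι r)) ^ n) f = 0 := harmonic_pderiv_pow n f hf ι hι r
  have hsplit : (Dop n (ι r)) ^ k = (Dop n (ι r)) ^ (k - n) * (Dop n (ι r)) ^ n := by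
    rw [← pow_add]
    congr 1
    omega
  show ((Dop n (ι r)) ^ k) f = 0
  rw [hsplit, Module.End.mul_apply, h0, map_zero]

end Stmt10Aux

theorem stmt10 (n : ℕ) (hn : 1 ≤ n) :
    ∀ k : ℕ, n ≤ k → ∀ f ∈ DH n, Estar n k f = 0 ∧ Fstar n k f = 0 := by
  intro k hk f hf
  constructor
  · rw [Estar, LinearMap.sum_apply]
    apply Finset.sum_eq_zero
    intro i _
    rw [LinearMap.comp_apply,
      Stmt10Aux.harmonic_pderiv_pow_k n k hk f hf Sum.inr (fun σ j => rfl) i,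
      map_zero]
  · rw [Fstar, LinearMap.sum_apply]
    apply Finset.sum_eq_zero
    intro i _
    rw [LinearMap.comp_apply,
      Stmt10Aux.harmonic_pderiv_pow_k n k hk f hf Sum.inl (fun σ j => rfl) i,
      map_zero]
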